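/- (Appendix, Case 2.) For the shared Werner state ρ_W(p) with 0 ≤ p ≤ 1, Bob's normalized reduced state after the PT evolution with Alice applying A₊ = 1 is explicitly ρ_B' = (Tr_A ρ₊)/Re(trace ρ₊) = !![1/2, Complex.I·p·sin α/(1+sin²α); −Complex.I·p·sin α/(1+sin²α), 1/2]. Consequently, ρ_B' equals Bob's initial reduced state (1/2)•1 (the maximally mixed qubit) if and only if p·sin α = 0. -/

import Mathlib

open Matrix Kronecker Complex
open scoped ComplexOrder

noncomputable section

/-- Pauli matrix `σx`. -/
def σx : Matrix (Fin 2) (Fin 2) ℂ := !![0, 1; 1, 0]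

/-- Pauli matrix `σy`. -/
def σy : Matrix (Fin 2) (Fin 2) ℂ := !![0, -Complex.I; Complex.I, 0]

/-- Pauli matrix `σz`. -/
def σz : Matrix (Fin 2) (Fin 2) ℂ := !![1, 0; 0, -1]

/-- The simulated PT-symmetric evolution operator at the chosen time. -/
def Upt (α : ℝ) : Matrix (Fin 2) (Fin 2) ℂ :=
  !![(Real.sin α : ℂ), -Complex.I; -Complex.I, -(Real.sin α : ℂ)]

/-- Alice's operation `A₊` (do nothing). -/
def Apos : Matrix (Fin 2) (Fin 2) ℂ := 1

/-- Alice's operation `A₋` (bit flip `σx`). -/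
def Aneg : Matrix (Fin 2) (Fin 2) ℂ := σx

/-- Unnormalized post-selected state after Alice applies `A₊` followed by the
simulated PT evolution. -/
def postPlus (α : ℝ) (ρ : Matrix (Fin 2 × Fin 2) (Fin 2 × Fin 2) ℂ) :
    Matrix (Fin 2 × Fin 2) (Fin 2 × Fin 2) ℂ :=
  ((Upt α * Apos) ⊗ₖ (1 : Matrix (Fin 2) (Fin 2) ℂ)) * ρ *
    ((Upt α * Apos) ⊗ₖ (1 : Matrix (Fin 2) (Fin 2) ℂ))ᴴ

/-- Unnormalized post-selected state after Alice applies `A₋` followed by the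
simulated PT evolution. -/
def postMinus (α : ℝ) (ρ : Matrix (Fin 2 × Fin 2) (Fin 2 × Fin 2) ℂ) :
    Matrix (Fin 2 × Fin 2) (Fin 2 × Fin 2) ℂ :=
  ((Upt α * Aneg) ⊗ₖ (1 : Matrix (Fin 2) (Fin 2) ℂ)) * ρ *
    ((Upt α * Aneg) ⊗ₖ (1 : Matrix (Fin 2) (Fin 2) ℂ))ᴴ

/-- Probability that Bob obtains outcome `Π` given Alice applied `A₊`. -/
def Pplus (α : ℝ) (ρ : Matrix (Fin 2 × Fin 2) (Fin 2 × Fin 2) ℂ)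
    (Pi : Matrix (Fin 2) (Fin 2) ℂ) : ℝ :=
  ((((1 : Matrix (Fin 2) (Fin 2) ℂ) ⊗ₖ Pi) * postPlus α ρ).trace).re /
    ((postPlus α ρ).trace).re

/-- Probability that Bob obtains outcome `Π` given Alice applied `A₋`. -/
def Pminus (α : ℝ) (ρ : Matrix (Fin 2 × Fin 2) (Fin 2 × Fin 2) ℂ)
    (Pi : Matrix (Fin 2) (Fin 2) ℂ) : ℝ :=
  ((((1 : Matrix (Fin 2) (Fin 2) ℂ) ⊗ₖ Pi) * postMinus α ρ).trace).re /
    ((postMinus α ρ).trace).re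

/-- Bob's `σy`-measurement projector onto `|+_y⟩ = (|0⟩ + i|1⟩)/√2`. -/
def Piy : Matrix (Fin 2) (Fin 2) ℂ :=
  (1/2 : ℂ) • !![1, -Complex.I; Complex.I, 1]

/-- Bob's rank-one projector `Π(z,u)` for an arbitrary projective measurement. -/
def Pizu (z u : ℝ) : Matrix (Fin 2) (Fin 2) ℂ :=
  !![((Real.cos (z/2))^2 : ℂ),
     (Real.cos (z/2) : ℂ) * (Real.sin (z/2) : ℂ) * Complex.exp (-(Complex.I * u));
     (Real.cos (z/2) : ℂ) * (Real.sin (z/2) : ℂ) * Complex.exp (Complex.I * u),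
     ((Real.sin (z/2))^2 : ℂ)]

/-- The single-qubit state `|+⟩ = (|0⟩ + |1⟩)/√2`. -/
def ketPlus : Fin 2 → ℂ := ![((1 / Real.sqrt 2 : ℝ) : ℂ), ((1 / Real.sqrt 2 : ℝ) : ℂ)]

/-- The single-qubit state `|−⟩ = (|0⟩ − |1⟩)/√2`. -/
def ketMinus : Fin 2 → ℂ := ![((1 / Real.sqrt 2 : ℝ) : ℂ), ((-(1 / Real.sqrt 2) : ℝ) : ℂ)]

/-- The (normalized) pure state `|ψ_{β,γ}⟩ = (β|++⟩ + γ|−−⟩)/√(β²+γ²)`. -/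
def ψpure (β γ : ℝ) : Fin 2 × Fin 2 → ℂ := fun q =>
  ((β : ℂ) * (ketPlus q.1 * ketPlus q.2) + (γ : ℂ) * (ketMinus q.1 * ketMinus q.2)) /
    ((Real.sqrt (β^2 + γ^2) : ℝ) : ℂ)

/-- The pure two-qubit density matrix `ρ_{β,γ} = |ψ_{β,γ}⟩⟨ψ_{β,γ}|`. -/
def ρpure (β γ : ℝ) : Matrix (Fin 2 × Fin 2) (Fin 2 × Fin 2) ℂ :=
  Matrix.vecMulVec (ψpure β γ) (fun q => starRingEnd ℂ (ψpure β γ q))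

/-- The maximally entangled state `|ψ⁺⟩ = (|00⟩ + |11⟩)/√2`. -/
def ψmax : Fin 2 × Fin 2 → ℂ := fun q =>
  if q.1 = q.2 then ((1 / Real.sqrt 2 : ℝ) : ℂ) else 0

/-- The two-qubit Werner state `ρ_W(p) = p |ψ⁺⟩⟨ψ⁺| + ((1-p)/4) 1`. -/
def ρWerner (p : ℝ) : Matrix (Fin 2 × Fin 2) (Fin 2 × Fin 2) ℂ :=
  (p : ℂ) • Matrix.vecMulVec ψmax (fun q => starRingEnd ℂ (ψmax q)) +
    (((1 - p) / 4 : ℝ) : ℂ) • 1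

/-- The canonical two-qubit state with magnetizations `mx my mz` (Alice),
`nx ny nz` (Bob) and diagonal correlators `Cxx Cyy Czz`. -/
def ρcan (mx my mz nx ny nz Cxx Cyy Czz : ℝ) :
    Matrix (Fin 2 × Fin 2) (Fin 2 × Fin 2) ℂ :=
  (1/4 : ℂ) • ((1 : Matrix (Fin 2 × Fin 2) (Fin 2 × Fin 2) ℂ)
    + (mx : ℂ) • (σx ⊗ₖ (1 : Matrix (Fin 2) (Fin 2) ℂ))
    + (my : ℂ) • (σy ⊗ₖ (1 : Matrix (Fin 2) (Fin 2) ℂ))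
    + (mz : ℂ) • (σz ⊗ₖ (1 : Matrix (Fin 2) (Fin 2) ℂ))
    + (nx : ℂ) • ((1 : Matrix (Fin 2) (Fin 2) ℂ) ⊗ₖ σx)
    + (ny : ℂ) • ((1 : Matrix (Fin 2) (Fin 2) ℂ) ⊗ₖ σy)
    + (nz : ℂ) • ((1 : Matrix (Fin 2) (Fin 2) ℂ) ⊗ₖ σz)
    + (Cxx : ℂ) • (σx ⊗ₖ σx)
    + (Cyy : ℂ) • (σy ⊗ₖ σy)
    + (Czz : ℂ) • (σz ⊗ₖ σz))

/-- Bob's reduced matrix: the partial trace over Alice's subsystem. -/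
def ptraceA (X : Matrix (Fin 2 × Fin 2) (Fin 2 × Fin 2) ℂ) :
    Matrix (Fin 2) (Fin 2) ℂ :=
  Matrix.of fun i j => ∑ k : Fin 2, X (k, i) (k, j)

/-- The positive semidefinite square root, as defined in the older Mathlib
(`Matrix.PosSemidef.sqrt`, since removed). -/
def Matrix.PosSemidef.sqrt {n : Type*} [Fintype n] [DecidableEq n] {𝕜 : Type*} [RCLike 𝕜]
    {A : Matrix n n 𝕜} (hA : A.PosSemidef) : Matrix n n 𝕜 :=
  hA.1.eigenvectorUnitary.1 * diagonal ((↑) ∘ Real.sqrt ∘ hA.1.eigenvalues) *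
    (star hA.1.eigenvectorUnitary : Matrix n n 𝕜)

/-- The trace distance `T(A,B) = (1/2) tr √((A-B)ᴴ (A-B))`, where the square
root is the positive semidefinite square root. -/
def traceDist (A B : Matrix (Fin 2) (Fin 2) ℂ) : ℝ :=
  (1/2) * (((Matrix.posSemidef_conjTranspose_mul_self (A - B)).sqrt).trace).re

/-- Appendix, Case 2: for the shared Werner state `ρ_W(p)`, Bob's normalized
reduced state after the PT evolution (Alice applying `A₊ = 1`) is
`!![1/2, i p sin α/(1+sin²α); −i p sin α/(1+sin²α), 1/2]`; consequently it
equals the maximally mixed qubit iff `p sin α = 0`. -/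
theorem stmt16 (α p : ℝ) (hp0 : 0 ≤ p) (hp1 : p ≤ 1) :
    (((postPlus α (ρWerner p)).trace).re)⁻¹ • ptraceA (postPlus α (ρWerner p)) =
      !![(1/2 : ℂ),
          Complex.I * (p : ℂ) * (Real.sin α : ℂ) / (1 + ((Real.sin α)^2 : ℝ));
         -(Complex.I * (p : ℂ) * (Real.sin α : ℂ) / (1 + ((Real.sin α)^2 : ℝ))),
          (1/2 : ℂ)] ∧
    ((((postPlus α (ρWerner p)).trace).re)⁻¹ • ptraceA (postPlus α (ρWerner p)) =
        (1/2 : ℂ) • (1 : Matrix (Fin 2) (Fin 2) ℂ) ↔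
      p * Real.sin α = 0) := by
  have h2 : ((Real.sqrt 2 : ℝ) : ℂ) * ((Real.sqrt 2 : ℝ) : ℂ) = 2 := by
    rw [← Complex.ofReal_mul, Real.mul_self_sqrt (by norm_num)]; norm_num
  have h2r : Real.sqrt 2 * Real.sqrt 2 = 2 := Real.mul_self_sqrt (by norm_num)
  have h4 : Real.sqrt 2 / 2 * (Real.sqrt 2 / 2) = 2⁻¹ := by
    rw [div_mul_div_comm, h2r]; norm_num
  have hden : (0:ℝ) < 1 + (Real.sin α)^2 := by positivity
  have htr : ((postPlus α (ρWerner p)).trace).re = 1 + (Real.sin α)^2 := by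
    have : (postPlus α (ρWerner p)).trace = ((1 + (Real.sin α)^2 : ℝ) : ℂ) := by
      simp only [postPlus, Upt, Apos, ρWerner, ψmax, Matrix.trace, Matrix.diag,
        Matrix.mul_apply, Matrix.conjTranspose_apply, Matrix.kroneckerMap_apply,
        Matrix.vecMulVec_apply, Matrix.one_apply, Matrix.add_apply, Matrix.smul_apply,
        Fintype.sum_prod_type, Fin.sum_univ_two, Matrix.mul_one]
      norm_num [Prod.ext_iff, Fin.ext_iff, Complex.ext_iff, ← Complex.ofReal_pow,
        -Complex.ofReal_sin, h4]
      ring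
    rw [this, Complex.ofReal_re]
  have hdc : ((1 + (Real.sin α)^2 : ℝ) : ℂ) ≠ 0 := by
    exact_mod_cast Complex.ofReal_ne_zero.mpr hden.ne'
  have hB : ptraceA (postPlus α (ρWerner p)) =
      !![(((1 + (Real.sin α)^2)/2 : ℝ) : ℂ), Complex.I * (p : ℂ) * (Real.sin α : ℂ);
         -(Complex.I * (p : ℂ) * (Real.sin α : ℂ)), (((1 + (Real.sin α)^2)/2 : ℝ) : ℂ)] := by
    ext i j
    fin_cases i <;> fin_cases j <;>
    · simp only [postPlus, Upt, Apos, ρWerner, ψmax, ptraceA, Matrix.of_apply,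
        Matrix.mul_apply, Matrix.conjTranspose_apply, Matrix.kroneckerMap_apply,
        Matrix.vecMulVec_apply, Matrix.one_apply, Matrix.add_apply, Matrix.smul_apply,
        Fintype.sum_prod_type, Fin.sum_univ_two, Matrix.mul_one,
        Matrix.cons_val', Matrix.cons_val_zero, Matrix.cons_val_one, Matrix.head_cons,
        Matrix.empty_val', Matrix.cons_val_fin_one]
      norm_num [Prod.ext_iff, Fin.ext_iff, Complex.ext_iff, ← Complex.ofReal_pow,
        -Complex.ofReal_sin, h4]
      ring
  have h5 : (1 : ℂ) + ((Real.sin α : ℂ))^2 ≠ 0 := by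
    exact_mod_cast hdc
  have hmain : (((postPlus α (ρWerner p)).trace).re)⁻¹ • ptraceA (postPlus α (ρWerner p)) =
      !![(1/2 : ℂ),
          Complex.I * (p : ℂ) * (Real.sin α : ℂ) / (1 + ((Real.sin α)^2 : ℝ));
         -(Complex.I * (p : ℂ) * (Real.sin α : ℂ) / (1 + ((Real.sin α)^2 : ℝ))),
          (1/2 : ℂ)] := by
    rw [htr, hB]
    ext i j
    fin_cases i <;> fin_cases j <;>
    · simp only [Matrix.smul_apply, Matrix.cons_val', Matrix.cons_val_zero,
        Matrix.cons_val_one, Matrix.head_cons, Matrix.empty_val', Matrix.cons_val_fin_one]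
      simp [Complex.real_smul, Complex.ofReal_inv, Complex.ofReal_add,
        Complex.ofReal_one, Complex.ofReal_div, Complex.ofReal_pow, Complex.ofReal_ofNat,
        Fin.mk_zero, Fin.mk_one, -Complex.ofReal_sin]
      field_simp [h5]
      try ring
      all_goals
        have h6 : (2:ℂ) + (Complex.sin (α:ℂ))^2*2 ≠ 0 := by
          rw [← Complex.ofReal_sin]; intro hh; apply h5; linear_combination hh/2
        field_simp [h6]
        try ring
  refine ⟨hmain, ?_⟩
  rw [hmain]
  constructor
  · intro h
    have h01 := congrFun (congrFun h 0) 1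
    simp only [Matrix.cons_val', Matrix.cons_val_zero, Matrix.cons_val_one, Matrix.head_cons,
      Matrix.smul_apply, Matrix.one_apply, Matrix.empty_val', Matrix.cons_val_fin_one] at h01
    norm_num at h01
    rcases h01 with (h01 | h01) | h01
    · rw [h01, zero_mul]
    · rw [← Complex.ofReal_sin, Complex.ofReal_eq_zero] at h01
      rw [h01, mul_zero]
    · exfalso; apply h5
      rw [← Complex.ofReal_sin] at h01
      linear_combination h01
  · intro h
    have : Complex.I * (p : ℂ) * (Real.sin α : ℂ) = 0 := by
      have hc : ((p:ℂ)) * ((Real.sin α : ℝ) : ℂ) = 0 := by exact_mod_cast h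
      rw [mul_assoc, hc, mul_zero]
    rw [this]
    ext i j
    fin_cases i <;> fin_cases j <;> norm_num [Matrix.one_apply]
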